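/- The angular coproduct is multiplicative: for all F₁, F₂ ∈ kF_X^a, Δ_a(F₁ ⋄_a F₂) = Δ_a(F₁) ⋄_a Δ_a(F₂), where kF_X^a ⊗ kF_X^a carries the componentwise product (a ⊗ b) ⋄_a (c ⊗ d) = (a ⋄_a c) ⊗ (b ⋄_a d). -/

import Mathlib

set_option linter.unreachableTactic false
set_option linter.unnecessarySeqFocus false
set_option linter.unusedTactic false

/-! Angularly decorated planar rooted trees and forests over a decoration set `X`.
A tree is either the single-vertex tree `•` (leaf) or the grafting `B⁺(F)` of a forest;
a forest is an alternating word `T₁ x₁ T₂ x₂ ⋯ x_{ℓ-1} T_ℓ` of trees and decorations. -/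
mutual
  inductive ATree (X : Type) : Type
    | leaf : ATree X
    | graft : AForest X → ATree X
  inductive AForest (X : Type) : Type
    | single : ATree X → AForest X
    | cons : ATree X → X → AForest X → AForest X
end

mutual
  /-- Depth of an angularly decorated tree. -/
  def ATree.depth {X : Type} : ATree X → ℕ
    | .leaf => 0
    | .graft F => AForest.depth F + 1
  /-- Depth of an angularly decorated forest. -/
  def AForest.depth {X : Type} : AForest X → ℕ
    | .single T => ATree.depth T
    | .cons T _ F => max (ATree.depth T) (AForest.depth F)
end

mutual
  /-- An auxiliary size of an angularly decorated tree. -/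
  def ATree.size {X : Type} : ATree X → ℕ
    | .leaf => 1
    | .graft F => AForest.size F + 1
  /-- An auxiliary size of an angularly decorated forest. -/
  def AForest.size {X : Type} : AForest X → ℕ
    | .single T => ATree.size T + 1
    | .cons T _ F => ATree.size T + AForest.size F + 1
end

mutual
  /-- The number of vertices of an angularly decorated tree. -/
  def ATree.deg {X : Type} : ATree X → ℕ
    | .leaf => 1
    | .graft F => AForest.deg F + 1
  /-- The number of vertices of an angularly decorated forest. -/
  def AForest.deg {X : Type} : AForest X → ℕ
    | .single T => ATree.deg T
    | .cons T _ F => ATree.deg T + AForest.deg F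
end

/-- Auxiliary lemma for termination proofs. -/
theorem natlex_of_le_of_lt {a₁ a₂ b₁ b₂ : ℕ} (h1 : a₁ ≤ a₂) (h2 : b₁ < b₂) :
    Prod.Lex (fun x y : ℕ => x < y) (fun x y : ℕ => x < y) (a₁, b₁) (a₂, b₂) := by
  rcases lt_or_eq_of_le h1 with h | rfl
  · exact Prod.Lex.left _ _ h
  · exact Prod.Lex.right _ h2

/-- `RBF k X` is the free `k`-module on the set of angularly decorated rooted forests. -/
abbrev RBF (k X : Type) [CommRing k] := AForest X →₀ k

mutual
  /-- The product `⋄ₐ` on basis trees (with values in the free module on trees). -/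
  noncomputable def mulT {k X : Type} [CommRing k] (lam : k) :
      ATree X → ATree X → (ATree X →₀ k)
    | .leaf, T' => Finsupp.single T' 1
    | T, .leaf => Finsupp.single T 1
    | .graft F, .graft F' =>
        Finsupp.mapDomain ATree.graft (mulF lam (.single (.graft F)) F')
          + Finsupp.mapDomain ATree.graft (mulF lam F (.single (.graft F')))
          + lam • Finsupp.mapDomain ATree.graft (mulF lam F F')
  termination_by T T' => (ATree.depth T + ATree.depth T', ATree.size T + ATree.size T')
  decreasing_by
    all_goals
      first
        | (apply Prod.Lex.left
           simp [ATree.depth, AForest.depth] <;> omega)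
        | (apply natlex_of_le_of_lt <;>
            simp [ATree.depth, AForest.depth, ATree.size, AForest.size] <;>
            omega)
  /-- The product `⋄ₐ` on basis forests. -/
  noncomputable def mulF {k X : Type} [CommRing k] (lam : k) :
      AForest X → AForest X → RBF k X
    | .single T, .single T' => Finsupp.mapDomain AForest.single (mulT lam T T')
    | .single T, .cons T' y G' =>
        Finsupp.mapDomain (fun t => AForest.cons t y G') (mulT lam T T')
    | .cons T x G, F' => Finsupp.mapDomain (fun g => AForest.cons T x g) (mulF lam G F')
  termination_by F F' => (AForest.depth F + AForest.depth F', AForest.size F + AForest.size F')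
  decreasing_by
    all_goals
      first
        | (apply Prod.Lex.left
           simp [ATree.depth, AForest.depth] <;> omega)
        | (apply natlex_of_le_of_lt <;>
            simp [ATree.depth, AForest.depth, ATree.size, AForest.size] <;>
            omega)
end

open scoped TensorProduct

variable {k X : Type} [CommRing k]

/-- The unit `•` of the Rota-Baxter algebra `kF_X^a`: the single-vertex tree. -/
noncomputable def RBF.one : RBF k X := Finsupp.single (AForest.single ATree.leaf) 1

/-- The canonical basis inclusion of forests into `kF_X^a`. -/
noncomputable def RBF.of (F : AForest X) : RBF k X := Finsupp.single F 1

/-- The natural map `i_X : X → kF_X^a`, `x ↦ • x •`. -/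
noncomputable def RBF.iX (x : X) : RBF k X :=
  RBF.of (AForest.cons ATree.leaf x (AForest.single ATree.leaf))

/-- The grafting operator `B⁺` as a `k`-linear operator on `kF_X^a`. -/
noncomputable def RBF.Bplus : RBF k X →ₗ[k] RBF k X :=
  Finsupp.lmapDomain k k (fun F => AForest.single (ATree.graft F))

/-- The multiplication `⋄ₐ` on `kF_X^a` as a `k`-bilinear map. -/
noncomputable def RBF.mul (lam : k) : RBF k X →ₗ[k] RBF k X →ₗ[k] RBF k X :=
  Finsupp.lift _ k _ fun F => Finsupp.lift _ k _ fun F' => mulF lam F F'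

/-- Concatenation of two forests with the angle between them decorated by `x`. -/
def concatA (x : X) : AForest X → AForest X → AForest X
  | .single T, F' => .cons T x F'
  | .cons T y G, F' => .cons T y (concatA x G F')

/-- Concatenation with middle angle decorated by `x`, as a bilinear map on `kF_X^a`. -/
noncomputable def RBF.concat (x : X) : RBF k X →ₗ[k] RBF k X →ₗ[k] RBF k X :=
  Finsupp.lift _ k _ fun F => Finsupp.lift _ k _ fun F' => RBF.of (concatA x F F')

/-- Given two bilinear maps `f g` on a module `M`, the bilinear map on `M ⊗ M` sending
`(a ⊗ b, c ⊗ d)` to `f a c ⊗ g b d`. -/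
noncomputable def mixMap {M : Type} [AddCommGroup M] [Module k M]
    (f g : M →ₗ[k] M →ₗ[k] M) :
    (M ⊗[k] M) →ₗ[k] (M ⊗[k] M) →ₗ[k] (M ⊗[k] M) :=
  TensorProduct.curry
    ((TensorProduct.map (TensorProduct.lift f) (TensorProduct.lift g)).comp
      (TensorProduct.tensorTensorTensorComm k M M M M).toLinearMap)

mutual
  /-- The angular coproduct of a basis tree: the sum of `cl(H) ⊗ T/H` over all
  subforests `H ⊑ T` (sequences of mutually disjoint full subtrees and bare angular
  decorations in planar order). -/
  noncomputable def coT (lam : k) : ATree X → RBF k X ⊗[k] RBF k X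
    | .leaf => RBF.one ⊗ₜ[k] RBF.one
    | .graft F => (RBF.of (AForest.single (ATree.graft F))) ⊗ₜ[k] RBF.one
        + (LinearMap.lTensor (RBF k X) RBF.Bplus) (coF lam F)
  /-- The angular coproduct of a basis forest: the sum of `cl(H) ⊗ F/H` over all
  subforests `H ⊑ F`. -/
  noncomputable def coF (lam : k) : AForest X → RBF k X ⊗[k] RBF k X
    | .single T => coT lam T
    | .cons T x G =>
        mixMap (RBF.concat x) (RBF.mul lam) (coT lam T) (coF lam G)
          + mixMap (RBF.mul lam) (RBF.concat x) (coT lam T) (coF lam G)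
end

/-- The angular coproduct `Δₐ : kF_X^a → kF_X^a ⊗ kF_X^a`,
`Δₐ(F) = Σ_{H ⊑ F} cl(H) ⊗ F/H`. -/
noncomputable def RBF.Delta (lam : k) : RBF k X →ₗ[k] RBF k X ⊗[k] RBF k X :=
  Finsupp.lift _ k _ fun F => coF lam F

/-- The counit `εₐ : kF_X^a → k` sending the single-vertex tree `•` to `1` and every
other forest to `0`. -/
noncomputable def RBF.eps : RBF k X →ₗ[k] k :=
  Finsupp.lift _ k _ fun F =>
    match F with
    | .single .leaf => (1 : k)
    | _ => 0

/-- The unit map `u : k → kF_X^a`, `c ↦ c •`. -/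
noncomputable def RBF.unit : k →ₗ[k] RBF k X :=
  LinearMap.toSpanSingleton k (RBF k X) RBF.one

/-! ### Auxiliary development -/

namespace RBFaux

open RBF Finsupp

variable {k X : Type} [CommRing k] {lam : k}

@[simp] theorem mul_of (F F' : AForest X) :
    RBF.mul lam (RBF.of F) (RBF.of F') = mulF lam F F' := by
  simp [RBF.mul, RBF.of, Finsupp.lift_apply, Finsupp.sum_single_index]

@[simp] theorem Delta_of (F : AForest X) :
    RBF.Delta lam (RBF.of F) = coF lam F := by
  simp [RBF.Delta, RBF.of, Finsupp.lift_apply, Finsupp.sum_single_index]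

@[simp] theorem concat_of (x : X) (F F' : AForest X) :
    RBF.concat (k := k) x (RBF.of F) (RBF.of F') = RBF.of (concatA x F F') := by
  simp [RBF.concat, RBF.of, Finsupp.lift_apply, Finsupp.sum_single_index]

@[simp] theorem Bplus_of (F : AForest X) :
    RBF.Bplus (RBF.of F) = RBF.of (k := k) (.single (.graft F)) := by
  simp [RBF.Bplus, RBF.of, Finsupp.mapDomain_single, Finsupp.lmapDomain_apply]

theorem single_eq_of (F : AForest X) : (Finsupp.single F 1 : RBF k X) = RBF.of F := rfl

theorem single_eq_smul_of (F : AForest X) (c : k) :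
    (Finsupp.single F c : RBF k X) = c • RBF.of F := by
  simp [RBF.of, Finsupp.smul_single]

/-! equation lemmas -/

theorem mulT_leaf_left (T' : ATree X) :
    mulT lam .leaf T' = Finsupp.single T' 1 := by rw [mulT]

theorem mulT_leaf_right (T : ATree X) :
    mulT lam T .leaf = Finsupp.single T 1 := by
  cases T with
  | leaf => rw [mulT]
  | graft F => rw [mulT]; intro h; exact absurd h (by simp)

theorem mulF_single_single (T T' : ATree X) :
    mulF lam (.single T) (.single T') = Finsupp.mapDomain AForest.single (mulT lam T T') := by
  rw [mulF]

theorem mulF_single_cons (T T' : ATree X) (y : X) (G' : AForest X) :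
    mulF lam (.single T) (.cons T' y G')
      = Finsupp.mapDomain (fun t => AForest.cons t y G') (mulT lam T T') := by
  rw [mulF]

theorem mulF_cons (T : ATree X) (x : X) (G F' : AForest X) :
    mulF lam (.cons T x G) F'
      = Finsupp.mapDomain (fun g => AForest.cons T x g) (mulF lam G F') := by
  rw [mulF]

theorem coF_single (T : ATree X) : coF lam (.single T) = coT lam T := by rw [coF]

theorem coF_cons (T : ATree X) (x : X) (G : AForest X) :
    coF lam (.cons T x G)
      = mixMap (RBF.concat x) (RBF.mul lam) (coT lam T) (coF lam G)
          + mixMap (RBF.mul lam) (RBF.concat x) (coT lam T) (coF lam G) := by rw [coF]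

theorem coT_leaf : coT (X := X) lam .leaf = RBF.one ⊗ₜ[k] RBF.one := by rw [coT]

theorem coT_graft (F : AForest X) :
    coT lam (.graft F) = (RBF.of (AForest.single (ATree.graft F))) ⊗ₜ[k] RBF.one
        + (LinearMap.lTensor (RBF k X) RBF.Bplus) (coF lam F) := by rw [coT]

/-! unit laws -/

theorem mulF_one_left (F : AForest X) : mulF lam (.single .leaf) F = RBF.of F := by
  cases F with
  | single T => rw [mulF_single_single, mulT_leaf_left, Finsupp.mapDomain_single]; rfl
  | cons T y G => rw [mulF_single_cons, mulT_leaf_left, Finsupp.mapDomain_single]; rfl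

theorem mulF_one_right : ∀ (F : AForest X), mulF lam F (.single .leaf) = RBF.of F
  | .single T => by rw [mulF_single_single, mulT_leaf_right, Finsupp.mapDomain_single]; rfl
  | .cons T y G => by
      rw [mulF_cons, mulF_one_right G]; simp [RBF.of, Finsupp.mapDomain_single]

theorem mul_one_left (v : RBF k X) : RBF.mul lam RBF.one v = v := by
  induction v using Finsupp.induction_linear with
  | zero => simp
  | add f g hf hg => rw [map_add, hf, hg]
  | single F c =>
      rw [single_eq_smul_of, map_smul, RBF.one, single_eq_of, mul_of, mulF_one_left]

theorem mul_one_right (v : RBF k X) : RBF.mul lam v RBF.one = v := by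
  induction v using Finsupp.induction_linear with
  | zero => simp
  | add f g hf hg => rw [map_add, LinearMap.add_apply, hf, hg]
  | single F c =>
      rw [single_eq_smul_of, map_smul, LinearMap.smul_apply, RBF.one, single_eq_of, mul_of,
        mulF_one_right]

end RBFaux

namespace RBFaux
open RBF Finsupp
variable {k X : Type} [CommRing k] {lam : k}

theorem mulT_graft_graft (F F' : AForest X) :
    mulT lam (.graft F) (.graft F')
      = Finsupp.mapDomain ATree.graft (mulF lam (.single (.graft F)) F')
          + Finsupp.mapDomain ATree.graft (mulF lam F (.single (.graft F')))
          + lam • Finsupp.mapDomain ATree.graft (mulF lam F F') := by rw [mulT]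

theorem mapDomain_single_graft (Z : AForest X →₀ k) :
    Finsupp.mapDomain AForest.single (Finsupp.mapDomain ATree.graft Z) = RBF.Bplus Z := by
  rw [RBF.Bplus, Finsupp.lmapDomain_apply, ← Finsupp.mapDomain_comp]; rfl

theorem mul_cons_left (T : ATree X) (x : X) (G : AForest X) (w : RBF k X) :
    RBF.mul lam (RBF.of (.cons T x G)) w
      = Finsupp.mapDomain (AForest.cons T x) (RBF.mul lam (RBF.of G) w) := by
  induction w using Finsupp.induction_linear with
  | zero => simp
  | add f g hf hg => rw [map_add, map_add, hf, hg, Finsupp.mapDomain_add]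
  | single F c =>
      rw [single_eq_smul_of, map_smul, map_smul, Finsupp.mapDomain_smul, mul_of, mul_of,
        mulF_cons]

theorem concat_cons_left (y : X) (T : ATree X) (x : X) (G : AForest X) (W : RBF k X) :
    RBF.concat y (RBF.of (.cons T x G)) W
      = Finsupp.mapDomain (AForest.cons T x) (RBF.concat y (RBF.of G) W) := by
  induction W using Finsupp.induction_linear with
  | zero => simp
  | add f g hf hg => rw [map_add, map_add, hf, hg, Finsupp.mapDomain_add]
  | single F c =>
      rw [single_eq_smul_of, map_smul, map_smul, Finsupp.mapDomain_smul, concat_of, concat_of]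
      simp [RBF.of, Finsupp.mapDomain_single, concatA]

theorem concat_single_left (x : X) (T : ATree X) (W : RBF k X) :
    RBF.concat x (RBF.of (.single T)) W = Finsupp.mapDomain (AForest.cons T x) W := by
  induction W using Finsupp.induction_linear with
  | zero => simp
  | add f g hf hg => rw [map_add, hf, hg, Finsupp.mapDomain_add]
  | single F c =>
      rw [single_eq_smul_of, map_smul, Finsupp.mapDomain_smul, concat_of]
      simp [RBF.of, Finsupp.mapDomain_single, concatA]

theorem concat_mapDomain_fun {α : Type} (y : X) (f : α → AForest X) (Z : α →₀ k)
    (E : AForest X) :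
    RBF.concat y (Finsupp.mapDomain f Z) (RBF.of E)
      = Finsupp.mapDomain (fun s => concatA y (f s) E) Z := by
  induction Z using Finsupp.induction_linear with
  | zero => simp
  | add g h hg hh => rw [Finsupp.mapDomain_add, map_add, LinearMap.add_apply, hg, hh,
      Finsupp.mapDomain_add]
  | single a c =>
      rw [Finsupp.mapDomain_single, Finsupp.mapDomain_single, single_eq_smul_of,
        single_eq_smul_of, map_smul, LinearMap.smul_apply, concat_of]

theorem concat_mapDomain_cons (y : X) (T : ATree X) (x : X) (Z W : RBF k X) :
    RBF.concat y (Finsupp.mapDomain (AForest.cons T x) Z) W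
      = Finsupp.mapDomain (AForest.cons T x) (RBF.concat y Z W) := by
  induction Z using Finsupp.induction_linear with
  | zero => simp
  | add g h hg hh => rw [Finsupp.mapDomain_add, map_add, LinearMap.add_apply, hg, hh,
      map_add, LinearMap.add_apply, Finsupp.mapDomain_add]
  | single F c =>
      rw [Finsupp.mapDomain_single, single_eq_smul_of, single_eq_smul_of, map_smul,
        LinearMap.smul_apply, map_smul, LinearMap.smul_apply, Finsupp.mapDomain_smul,
        concat_cons_left]

end RBFaux

namespace RBFaux
open RBF Finsupp
variable {k X : Type} [CommRing k] {lam : k}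

/-- The Rota–Baxter identity for `⋄ₐ`. -/
theorem RB_mul (u v : RBF k X) :
    RBF.mul lam (RBF.Bplus u) (RBF.Bplus v)
      = RBF.Bplus (RBF.mul lam (RBF.Bplus u) v) + RBF.Bplus (RBF.mul lam u (RBF.Bplus v))
          + lam • RBF.Bplus (RBF.mul lam u v) := by
  induction u using Finsupp.induction_linear with
  | zero => simp
  | add f g hf hg =>
      simp only [map_add, LinearMap.add_apply] at hf hg ⊢
      rw [hf, hg]; module
  | single F c =>
    induction v using Finsupp.induction_linear with
    | zero => simp
    | add f g hf hg =>
        simp only [map_add, LinearMap.add_apply, smul_add] at hf hg ⊢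
        rw [hf, hg]; module
    | single F' c' =>
        rw [single_eq_smul_of, single_eq_smul_of]
        simp only [map_smul, LinearMap.smul_apply]
        rw [Bplus_of, Bplus_of, mul_of, mulF_single_single, mulT_graft_graft,
          Finsupp.mapDomain_add, Finsupp.mapDomain_add, Finsupp.mapDomain_smul,
          mapDomain_single_graft, mapDomain_single_graft, mapDomain_single_graft,
          mul_of, mul_of, mul_of]
        module

/-- The cocycle property of `Δₐ` with respect to `B⁺`. -/
theorem Delta_Bplus (v : RBF k X) :
    RBF.Delta lam (RBF.Bplus v)
      = (RBF.Bplus v) ⊗ₜ[k] RBF.one + LinearMap.lTensor (RBF k X) RBF.Bplus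
          (RBF.Delta lam v) := by
  induction v using Finsupp.induction_linear with
  | zero => simp
  | add f g hf hg =>
      simp only [map_add, TensorProduct.add_tmul] at hf hg ⊢
      rw [hf, hg]; module
  | single F c =>
      rw [single_eq_smul_of]
      simp only [map_smul]
      rw [Bplus_of, Delta_of, Delta_of, coF_single, coT_graft, smul_add, TensorProduct.smul_tmul']

theorem mulF_concat_right (y : X) :
    ∀ (A C E : AForest X),
      mulF lam A (concatA y C E) = RBF.concat y (mulF lam A C) (RBF.of E)
  | .cons T x G, C, E => by
      rw [mulF_cons, mulF_cons, mulF_concat_right y G C E, concat_mapDomain_cons]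
  | .single T, .single T', E => by
      rw [show concatA y (AForest.single T') E = .cons T' y E from rfl, mulF_single_cons,
        mulF_single_single, concat_mapDomain_fun]
      simp [concatA]
  | .single T, .cons T' z G', E => by
      rw [show concatA y (AForest.cons T' z G') E = .cons T' z (concatA y G' E) from rfl,
        mulF_single_cons, mulF_single_cons, concat_mapDomain_fun]
      simp [concatA]

theorem mulF_concat_left (x : X) :
    ∀ (A C E : AForest X),
      mulF lam (concatA x A C) E = RBF.concat x (RBF.of A) (mulF lam C E)
  | .single T, C, E => by
      rw [show concatA x (AForest.single T) C = .cons T x C from rfl, mulF_cons,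
        concat_single_left]
  | .cons T z G, C, E => by
      rw [show concatA x (AForest.cons T z G) C = .cons T z (concatA x G C) from rfl,
        mulF_cons, mulF_concat_left x G C E, concat_cons_left]

theorem mul_concat_right (y : X) (u v w : RBF k X) :
    RBF.mul lam u (RBF.concat y v w) = RBF.concat y (RBF.mul lam u v) w := by
  induction u using Finsupp.induction_linear with
  | zero => simp
  | add f g hf hg => simp only [map_add, LinearMap.add_apply, hf, hg]
  | single A a =>
    induction v using Finsupp.induction_linear with
    | zero => simp
    | add f g hf hg => simp only [map_add, LinearMap.add_apply, hf, hg]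
    | single C c =>
      induction w using Finsupp.induction_linear with
      | zero => simp
      | add f g hf hg => simp only [map_add, LinearMap.add_apply, hf, hg]
      | single E e =>
          simp only [single_eq_smul_of, map_smul, LinearMap.smul_apply, concat_of, mul_of]
          rw [mulF_concat_right]

theorem mul_concat_left (x : X) (u v w : RBF k X) :
    RBF.mul lam (RBF.concat x u v) w = RBF.concat x u (RBF.mul lam v w) := by
  induction u using Finsupp.induction_linear with
  | zero => simp
  | add f g hf hg => simp only [map_add, LinearMap.add_apply, hf, hg]
  | single A a =>
    induction v using Finsupp.induction_linear with
    | zero => simp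
    | add f g hf hg => simp only [map_add, LinearMap.add_apply, hf, hg]
    | single C c =>
      induction w using Finsupp.induction_linear with
      | zero => simp
      | add f g hf hg => simp only [map_add, LinearMap.add_apply, hf, hg]
      | single E e =>
          simp only [single_eq_smul_of, map_smul, LinearMap.smul_apply, concat_of, mul_of]
          rw [mulF_concat_left]

end RBFaux

namespace RBFaux
open RBF Finsupp
variable {k X : Type} [CommRing k] {lam : k}

/-- Number of `cons` constructors in a forest. -/
def flen {X : Type} : AForest X → ℕ
  | .single _ => 0
  | .cons _ _ G => flen G + 1

/-- Associativity of `⋄ₐ` on basis forests. -/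
theorem mul_assoc3 (lam : k) :
    ∀ (F F' F'' : AForest X),
      RBF.mul lam (RBF.mul lam (RBF.of F) (RBF.of F')) (RBF.of F'')
        = RBF.mul lam (RBF.of F) (RBF.mul lam (RBF.of F') (RBF.of F''))
  | .cons T x G, F', F'' => by
      rw [show AForest.cons T x G = concatA x (.single T) G from rfl, ← concat_of,
        mul_concat_left, mul_concat_left, mul_assoc3 lam G F' F'', ← mul_concat_left]
  | .single T, .cons T' y G', F'' => by
      rw [show AForest.cons T' y G' = concatA y (.single T') G' from rfl, ← concat_of,
        mul_concat_right, mul_concat_left, mul_concat_left, mul_concat_right]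
  | .single T, .single T', .cons T'' z G'' => by
      rw [show AForest.cons T'' z G'' = concatA z (.single T'') G'' from rfl, ← concat_of,
        mul_concat_right, mul_concat_right, mul_concat_right,
        mul_assoc3 lam (.single T) (.single T') (.single T'')]
  | .single .leaf, .single T', .single T'' => by
      rw [show RBF.of (k := k) (AForest.single ATree.leaf) = RBF.one from rfl,
        mul_one_left, mul_one_left]
  | .single (.graft F0), .single .leaf, .single T'' => by
      rw [show RBF.of (k := k) (AForest.single ATree.leaf) = RBF.one from rfl,
        mul_one_right, mul_one_left]
  | .single (.graft F0), .single (.graft F1), .single .leaf => by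
      rw [show RBF.of (k := k) (AForest.single ATree.leaf) = RBF.one from rfl,
        mul_one_right, mul_one_right]
  | .single (.graft F0), .single (.graft F1), .single (.graft F2) => by
      have I1 := mul_assoc3 lam (.single (.graft F0)) (.single (.graft F1)) F2
      have I2 := mul_assoc3 lam (.single (.graft F0)) F1 (.single (.graft F2))
      have I3 := mul_assoc3 lam F0 (.single (.graft F1)) (.single (.graft F2))
      have I4 := mul_assoc3 lam F0 F1 (.single (.graft F2))
      have I5 := mul_assoc3 lam (.single (.graft F0)) F1 F2
      have I6 := mul_assoc3 lam F0 (.single (.graft F1)) F2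
      have I7 := mul_assoc3 lam F0 F1 F2
      simp only [← Bplus_of] at I1 I2 I3 I4 I5 I6 I7 ⊢
      set u := RBF.of (k := k) F0
      set v := RBF.of (k := k) F1
      set w := RBF.of (k := k) F2
      have hab : RBF.mul lam (RBF.Bplus u) (RBF.Bplus v)
          = RBF.Bplus (RBF.mul lam (RBF.Bplus u) v + RBF.mul lam u (RBF.Bplus v)
              + lam • RBF.mul lam u v) := by
        rw [RB_mul]; simp only [map_add, map_smul]
      rw [hab, RB_mul]
      rw [← hab, I1]
      simp only [map_add, LinearMap.add_apply, map_smul, LinearMap.smul_apply, smul_add]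
      rw [I2, I3, I4, I5, I6, I7]
      simp only [RB_mul, map_add, LinearMap.add_apply, map_smul, LinearMap.smul_apply,
        smul_add]
      module
  termination_by F F' F'' =>
    (AForest.depth F + AForest.depth F' + AForest.depth F'',
      flen F + flen F' + flen F'')
  decreasing_by
    all_goals
      first
        | (apply Prod.Lex.left
           simp [ATree.depth, AForest.depth] <;> omega)
        | (apply natlex_of_le_of_lt <;>
            simp [ATree.depth, AForest.depth, flen] <;>
            omega)

/-- Associativity of `⋄ₐ`. -/
theorem mul_assoc (u v w : RBF k X) :
    RBF.mul lam (RBF.mul lam u v) w = RBF.mul lam u (RBF.mul lam v w) := by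
  induction u using Finsupp.induction_linear with
  | zero => simp
  | add f g hf hg => simp only [map_add, LinearMap.add_apply, hf, hg]
  | single A a =>
    induction v using Finsupp.induction_linear with
    | zero => simp
    | add f g hf hg => simp only [map_add, LinearMap.add_apply, hf, hg]
    | single C c =>
      induction w using Finsupp.induction_linear with
      | zero => simp
      | add f g hf hg => simp only [map_add, LinearMap.add_apply, hf, hg]
      | single E e =>
          simp only [single_eq_smul_of, map_smul, LinearMap.smul_apply]
          rw [mul_assoc3]

end RBFaux

namespace RBFaux
open RBF Finsupp
variable {k X : Type} [CommRing k] {lam : k}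

theorem mixMap_tmul {M : Type} [AddCommGroup M] [Module k M]
    (f g : M →ₗ[k] M →ₗ[k] M) (a b c d : M) :
    mixMap f g (a ⊗ₜ[k] b) (c ⊗ₜ[k] d) = f a c ⊗ₜ[k] g b d := by
  simp [mixMap, TensorProduct.tensorTensorTensorComm_tmul]

theorem mixMap_one_left (z : RBF k X ⊗[k] RBF k X) :
    mixMap (RBF.mul lam) (RBF.mul lam) (RBF.one ⊗ₜ[k] RBF.one) z = z := by
  induction z using TensorProduct.induction_on with
  | zero => simp
  | tmul p q => rw [mixMap_tmul, mul_one_left, mul_one_left]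
  | add x y hx hy => rw [map_add, hx, hy]

theorem mixMap_one_right (z : RBF k X ⊗[k] RBF k X) :
    mixMap (RBF.mul lam) (RBF.mul lam) z (RBF.one ⊗ₜ[k] RBF.one) = z := by
  induction z using TensorProduct.induction_on with
  | zero => simp
  | tmul p q => rw [mixMap_tmul, mul_one_right, mul_one_right]
  | add x y hx hy => rw [map_add, LinearMap.add_apply, hx, hy]

theorem mixL (a : RBF k X) (z : RBF k X ⊗[k] RBF k X) :
    mixMap (RBF.mul lam) (RBF.mul lam) (a ⊗ₜ[k] RBF.one)
        (LinearMap.lTensor (RBF k X) RBF.Bplus z)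
      = LinearMap.lTensor (RBF k X) RBF.Bplus
          (mixMap (RBF.mul lam) (RBF.mul lam) (a ⊗ₜ[k] RBF.one) z) := by
  induction z using TensorProduct.induction_on with
  | zero => simp
  | tmul p q => rw [LinearMap.lTensor_tmul, mixMap_tmul, mixMap_tmul,
      LinearMap.lTensor_tmul, mul_one_left, mul_one_left]
  | add x y hx hy => simp only [map_add, LinearMap.add_apply, hx, hy]

theorem mixR (c : RBF k X) (z : RBF k X ⊗[k] RBF k X) :
    mixMap (RBF.mul lam) (RBF.mul lam) (LinearMap.lTensor (RBF k X) RBF.Bplus z)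
        (c ⊗ₜ[k] RBF.one)
      = LinearMap.lTensor (RBF k X) RBF.Bplus
          (mixMap (RBF.mul lam) (RBF.mul lam) z (c ⊗ₜ[k] RBF.one)) := by
  induction z using TensorProduct.induction_on with
  | zero => simp
  | tmul p q => rw [LinearMap.lTensor_tmul, mixMap_tmul, mixMap_tmul,
      LinearMap.lTensor_tmul, mul_one_right, mul_one_right]
  | add x y hx hy => simp only [map_add, LinearMap.add_apply, hx, hy]

set_option maxHeartbeats 1000000 in
theorem mixBB (z w : RBF k X ⊗[k] RBF k X) :
    mixMap (RBF.mul lam) (RBF.mul lam) (LinearMap.lTensor (RBF k X) RBF.Bplus z)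
        (LinearMap.lTensor (RBF k X) RBF.Bplus w)
      = LinearMap.lTensor (RBF k X) RBF.Bplus
          (mixMap (RBF.mul lam) (RBF.mul lam)
            (LinearMap.lTensor (RBF k X) RBF.Bplus z) w)
        + LinearMap.lTensor (RBF k X) RBF.Bplus
            (mixMap (RBF.mul lam) (RBF.mul lam) z
              (LinearMap.lTensor (RBF k X) RBF.Bplus w))
        + lam • LinearMap.lTensor (RBF k X) RBF.Bplus
            (mixMap (RBF.mul lam) (RBF.mul lam) z w) := by
  induction z using TensorProduct.induction_on with
  | zero => simp
  | add x y hx hy =>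
      simp only [map_add, LinearMap.add_apply, smul_add] at hx hy ⊢
      rw [hx, hy]; module
  | tmul r s =>
    induction w using TensorProduct.induction_on with
    | zero => simp
    | add x y hx hy =>
        simp only [map_add, LinearMap.add_apply, smul_add] at hx hy ⊢
        rw [hx, hy]; module
    | tmul p q =>
        simp only [LinearMap.lTensor_tmul, mixMap_tmul, RB_mul,
          TensorProduct.tmul_add, TensorProduct.tmul_smul]

theorem MIX1a (y : X) (U V W : RBF k X ⊗[k] RBF k X) :
    mixMap (RBF.concat y) (RBF.mul lam) (mixMap (RBF.mul lam) (RBF.mul lam) U V) W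
      = mixMap (RBF.mul lam) (RBF.mul lam) U
          (mixMap (RBF.concat y) (RBF.mul lam) V W) := by
  induction U using TensorProduct.induction_on with
  | zero => simp
  | add z t hz ht => simp only [map_add, LinearMap.add_apply, hz, ht]
  | tmul a b =>
    induction V using TensorProduct.induction_on with
    | zero => simp
    | add z t hz ht => simp only [map_add, LinearMap.add_apply, hz, ht]
    | tmul c d =>
      induction W using TensorProduct.induction_on with
      | zero => simp
      | add z t hz ht => simp only [map_add, LinearMap.add_apply, hz, ht]
      | tmul e f =>
          simp only [mixMap_tmul]
          rw [mul_concat_right, mul_assoc]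

theorem MIX1b (y : X) (U V W : RBF k X ⊗[k] RBF k X) :
    mixMap (RBF.mul lam) (RBF.concat y) (mixMap (RBF.mul lam) (RBF.mul lam) U V) W
      = mixMap (RBF.mul lam) (RBF.mul lam) U
          (mixMap (RBF.mul lam) (RBF.concat y) V W) := by
  induction U using TensorProduct.induction_on with
  | zero => simp
  | add z t hz ht => simp only [map_add, LinearMap.add_apply, hz, ht]
  | tmul a b =>
    induction V using TensorProduct.induction_on with
    | zero => simp
    | add z t hz ht => simp only [map_add, LinearMap.add_apply, hz, ht]
    | tmul c d =>
      induction W using TensorProduct.induction_on with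
      | zero => simp
      | add z t hz ht => simp only [map_add, LinearMap.add_apply, hz, ht]
      | tmul e f =>
          simp only [mixMap_tmul]
          rw [mul_concat_right, mul_assoc]

theorem MIX2a (x : X) (U V W : RBF k X ⊗[k] RBF k X) :
    mixMap (RBF.concat x) (RBF.mul lam) U (mixMap (RBF.mul lam) (RBF.mul lam) V W)
      = mixMap (RBF.mul lam) (RBF.mul lam)
          (mixMap (RBF.concat x) (RBF.mul lam) U V) W := by
  induction U using TensorProduct.induction_on with
  | zero => simp
  | add z t hz ht => simp only [map_add, LinearMap.add_apply, hz, ht]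
  | tmul a b =>
    induction V using TensorProduct.induction_on with
    | zero => simp
    | add z t hz ht => simp only [map_add, LinearMap.add_apply, hz, ht]
    | tmul c d =>
      induction W using TensorProduct.induction_on with
      | zero => simp
      | add z t hz ht => simp only [map_add, LinearMap.add_apply, hz, ht]
      | tmul e f =>
          simp only [mixMap_tmul]
          rw [mul_concat_left, mul_assoc]

theorem MIX2b (x : X) (U V W : RBF k X ⊗[k] RBF k X) :
    mixMap (RBF.mul lam) (RBF.concat x) U (mixMap (RBF.mul lam) (RBF.mul lam) V W)
      = mixMap (RBF.mul lam) (RBF.mul lam)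
          (mixMap (RBF.mul lam) (RBF.concat x) U V) W := by
  induction U using TensorProduct.induction_on with
  | zero => simp
  | add z t hz ht => simp only [map_add, LinearMap.add_apply, hz, ht]
  | tmul a b =>
    induction V using TensorProduct.induction_on with
    | zero => simp
    | add z t hz ht => simp only [map_add, LinearMap.add_apply, hz, ht]
    | tmul c d =>
      induction W using TensorProduct.induction_on with
      | zero => simp
      | add z t hz ht => simp only [map_add, LinearMap.add_apply, hz, ht]
      | tmul e f =>
          simp only [mixMap_tmul]
          rw [mul_concat_left, mul_assoc]

end RBFaux

namespace RBFaux
open RBF Finsupp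
variable {k X : Type} [CommRing k] {lam : k}

theorem Delta_mapDomain_cons (T : ATree X) (x : X) (Z : RBF k X) :
    RBF.Delta lam (Finsupp.mapDomain (AForest.cons T x) Z)
      = mixMap (RBF.concat x) (RBF.mul lam) (coT lam T) (RBF.Delta lam Z)
          + mixMap (RBF.mul lam) (RBF.concat x) (coT lam T) (RBF.Delta lam Z) := by
  induction Z using Finsupp.induction_linear with
  | zero => simp
  | add f g hf hg =>
      simp only [Finsupp.mapDomain_add, map_add, hf, hg]; module
  | single F c =>
      rw [Finsupp.mapDomain_single, single_eq_smul_of, single_eq_smul_of, map_smul, map_smul,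
        Delta_of, Delta_of, map_smul, map_smul, coF_cons, smul_add]

theorem Delta_mapDomain_consR (y : X) (G' : AForest X) (Z : ATree X →₀ k) :
    RBF.Delta lam (Finsupp.mapDomain (fun S => AForest.cons S y G') Z)
      = mixMap (RBF.concat y) (RBF.mul lam)
            (RBF.Delta lam (Finsupp.mapDomain AForest.single Z)) (coF lam G')
          + mixMap (RBF.mul lam) (RBF.concat y)
              (RBF.Delta lam (Finsupp.mapDomain AForest.single Z)) (coF lam G') := by
  induction Z using Finsupp.induction_linear with
  | zero => simp
  | add f g hf hg =>
      simp only [Finsupp.mapDomain_add, map_add, LinearMap.add_apply, hf, hg]; module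
  | single S c =>
      rw [Finsupp.mapDomain_single, Finsupp.mapDomain_single, single_eq_smul_of,
        single_eq_smul_of, map_smul, map_smul, Delta_of, Delta_of, coF_cons, coF_single,
        map_smul, LinearMap.smul_apply, map_smul, LinearMap.smul_apply, smul_add]

set_option maxHeartbeats 1000000 in
/-- Multiplicativity of `Δₐ` on basis forests. -/
theorem keyF (lam : k) :
    ∀ (F F' : AForest X),
      RBF.Delta lam (mulF lam F F')
        = mixMap (RBF.mul lam) (RBF.mul lam) (coF lam F) (coF lam F')
  | .cons T x G, F' => by
      rw [mulF_cons, Delta_mapDomain_cons, keyF lam G F', coF_cons (x := x),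
        MIX2a, MIX2b, ← LinearMap.add_apply, ← map_add]
  | .single T, .cons T' y G' => by
      rw [mulF_single_cons, Delta_mapDomain_consR, ← mulF_single_single,
        keyF lam (.single T) (.single T'), coF_single (T := T), coF_single (T := T'),
        coF_cons, MIX1a, MIX1b, ← map_add]
  | .single .leaf, .single T' => by
      rw [mulF_single_single, mulT_leaf_left, Finsupp.mapDomain_single, single_eq_of,
        Delta_of, coF_single, coF_single, coT_leaf, mixMap_one_left]
  | .single (.graft F0), .single .leaf => by
      rw [mulF_single_single, mulT_leaf_right, Finsupp.mapDomain_single, single_eq_of,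
        Delta_of, coF_single, coF_single, coT_leaf, mixMap_one_right]
  | .single (.graft F0), .single (.graft F1) => by
      have I1 := keyF lam (.single (.graft F0)) F1
      have I2 := keyF lam F0 (.single (.graft F1))
      have I3 := keyF lam F0 F1
      have hP : mulF lam (AForest.single (ATree.graft F0)) (AForest.single (ATree.graft F1))
          = RBF.Bplus (mulF lam (.single (.graft F0)) F1)
              + RBF.Bplus (mulF lam F0 (.single (.graft F1)))
              + lam • RBF.Bplus (mulF lam F0 F1) := by
        rw [mulF_single_single, mulT_graft_graft, Finsupp.mapDomain_add,
          Finsupp.mapDomain_add, Finsupp.mapDomain_smul, mapDomain_single_graft,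
          mapDomain_single_graft, mapDomain_single_graft]
      rw [hP]
      simp only [map_add, map_smul, Delta_Bplus]
      rw [I1, I2, I3]
      -- expand the coproducts of the two grafted trees on the right-hand side
      rw [coF_single, coF_single, coT_graft, coT_graft]
      simp only [map_add, LinearMap.add_apply, smul_add]
      rw [mixL, mixR, mixBB]
      simp only [mixMap_tmul, mul_of, hP, mul_one_left, TensorProduct.add_tmul,
        TensorProduct.smul_tmul', map_add, LinearMap.add_apply, smul_add]
      module
  termination_by F F' =>
    (AForest.depth F + AForest.depth F', flen F + flen F')
  decreasing_by
    all_goals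
      first
        | (apply Prod.Lex.left
           simp [ATree.depth, AForest.depth] <;> omega)
        | (apply natlex_of_le_of_lt <;>
            simp [ATree.depth, AForest.depth, flen] <;>
            omega)

end RBFaux

/-- The angular coproduct is multiplicative: for all
`F₁, F₂ ∈ kF_X^a`, `Δₐ(F₁ ⋄ₐ F₂) = Δₐ(F₁) ⋄ₐ Δₐ(F₂)`, where `kF_X^a ⊗ kF_X^a` carries
the componentwise product `(a ⊗ b) ⋄ₐ (c ⊗ d) = (a ⋄ₐ c) ⊗ (b ⋄ₐ d)`. -/
theorem angular_coproduct_multiplicative (k X : Type) [CommRing k] (lam : k)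
    (a b : RBF k X) :
    RBF.Delta lam (RBF.mul lam a b)
      = mixMap (RBF.mul lam) (RBF.mul lam) (RBF.Delta lam a) (RBF.Delta lam b) := by
  induction a using Finsupp.induction_linear with
  | zero => simp
  | add f g hf hg => simp only [map_add, LinearMap.add_apply, hf, hg]
  | single A c =>
    induction b using Finsupp.induction_linear with
    | zero => simp
    | add f g hf hg => simp only [map_add, LinearMap.add_apply, hf, hg]
    | single B d =>
        simp only [RBFaux.single_eq_smul_of, map_smul, LinearMap.smul_apply,
          RBFaux.mul_of, RBFaux.Delta_of]
        rw [RBFaux.keyF]
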